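/- (Counterexample: the necessary conditions are not sufficient) Let H = ℓ²(ℕ, ℝ), let x ∈ H have coordinates x(n) = 1/(n+1), let B1 : H → H be given by (B1 f)(n) = f(n)/(n+1)², let B2 : H → H be given by B2 h = ⟨h, x⟩ · x, let A1 = 0 : H → H, and let A2 : H → H be the orthogonal projection onto the one-dimensional span of x. Then: (a) ‖A1 h‖ ≤ ‖B1 h‖ for all h ∈ H; (b) for all h4, h5 ∈ H, if B1 h4 + B2 h5 = 0 then A1 h4 + A2 h5 = 0 (note B1, B2, A1, A2 are self-adjoint); but (c) it is NOT the case that for every h1 ∈ H and every ε > 0 there exists h2 ∈ H with A1 h1 = B1 h2 and ‖A2 h1 − B2 h2‖ ≤ ε; indeed, taking h1 = x and ε = ‖x‖/2, there is no h2 ∈ H with B1 h2 = 0 and ‖A2 x − B2 h2‖ ≤ ‖x‖/2. -/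

import Mathlib

/-- Counterexample: the necessary conditions of the mixed goal are not sufficient.
In `H = ℓ²(ℕ, ℝ)`, with `x(n) = 1/(n+1)`, `(B1 f)(n) = f(n)/(n+1)²`,
`B2 h = ⟨h, x⟩ • x`, `A1 = 0` and `A2` the orthogonal projection onto `ℝ·x`
(all self-adjoint), the majorization and kernel conditions hold, but the mixed
exact/approximate goal fails (witnessed by `h1 = x` and `ε = ‖x‖/2`). -/
theorem necessary_conditions_not_sufficient_counterexample
    (x : lp (fun _ : ℕ => ℝ) 2)
    (hx : ∀ n : ℕ, x n = 1 / ((n : ℝ) + 1))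
    (B1 : lp (fun _ : ℕ => ℝ) 2 →L[ℝ] lp (fun _ : ℕ => ℝ) 2)
    (hB1 : ∀ (f : lp (fun _ : ℕ => ℝ) 2) (n : ℕ), B1 f n = f n / ((n : ℝ) + 1) ^ 2)
    (B2 : lp (fun _ : ℕ => ℝ) 2 →L[ℝ] lp (fun _ : ℕ => ℝ) 2)
    (hB2 : ∀ h : lp (fun _ : ℕ => ℝ) 2, B2 h = (inner ℝ h x : ℝ) • x)
    (A1 : lp (fun _ : ℕ => ℝ) 2 →L[ℝ] lp (fun _ : ℕ => ℝ) 2)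
    (hA1 : A1 = 0)
    (A2 : lp (fun _ : ℕ => ℝ) 2 →L[ℝ] lp (fun _ : ℕ => ℝ) 2)
    (hA2 : ∀ h : lp (fun _ : ℕ => ℝ) 2,
      A2 h ∈ Submodule.span ℝ {x} ∧ h - A2 h ∈ (Submodule.span ℝ {x})ᗮ) :
    (∀ h : lp (fun _ : ℕ => ℝ) 2, ‖A1 h‖ ≤ ‖B1 h‖) ∧
    (∀ h4 h5 : lp (fun _ : ℕ => ℝ) 2, B1 h4 + B2 h5 = 0 → A1 h4 + A2 h5 = 0) ∧
    ¬ (∀ h1 : lp (fun _ : ℕ => ℝ) 2, ∀ ε : ℝ, 0 < ε →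
      ∃ h2 : lp (fun _ : ℕ => ℝ) 2, A1 h1 = B1 h2 ∧ ‖A2 h1 - B2 h2‖ ≤ ε) ∧
    ¬ (∃ h2 : lp (fun _ : ℕ => ℝ) 2, B1 h2 = 0 ∧ ‖A2 x - B2 h2‖ ≤ ‖x‖ / 2) := by

  classical
  have hxpos : (0:ℝ) < ‖x‖ := by
    have h0 : ‖x 0‖ ≤ ‖x‖ := lp.norm_apply_le_norm (by norm_num) x 0
    rw [hx 0] at h0
    norm_num at h0
    linarith
  -- last conjunct
  have last : ¬ (∃ h2 : lp (fun _ : ℕ => ℝ) 2,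
      B1 h2 = 0 ∧ ‖A2 x - B2 h2‖ ≤ ‖x‖ / 2) := by
    rintro ⟨h2, hB, hle⟩
    have h2z : h2 = 0 := by
      apply lp.ext
      funext n
      have hn : B1 h2 n = (0 : lp (fun _ : ℕ => ℝ) 2) n := by rw [hB]
      rw [hB1 h2 n] at hn
      have hpos : ((n:ℝ) + 1) ^ 2 ≠ 0 := by positivity
      have : h2 n / ((n:ℝ) + 1) ^ 2 = 0 := by simpa using hn
      field_simp at this
      simpa using this
    have hB2z : B2 h2 = 0 := by
      rw [h2z, hB2]
      simp
    have hA2x : A2 x = x := by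
      obtain ⟨hs, ho⟩ := hA2 x
      have hmem : x - A2 x ∈ Submodule.span ℝ {x} :=
        Submodule.sub_mem _ (Submodule.mem_span_singleton_self x) hs
      have h0 : (inner ℝ (x - A2 x) (x - A2 x) : ℝ) = 0 :=
        (Submodule.mem_orthogonal _ _).mp ho (x - A2 x) hmem
      have := inner_self_eq_zero.mp h0
      have : x - A2 x = 0 := this
      linear_combination (norm := abel) -this
    rw [hA2x, hB2z, sub_zero] at hle
    linarith
  refine ⟨?_, ?_, ?_, last⟩
  · intro h
    rw [hA1]
    simp [norm_nonneg]
  · intro h4 h5 heq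
    rw [hA1]
    simp only [ContinuousLinearMap.zero_apply, zero_add]
    obtain ⟨hs, ho⟩ := hA2 h5
    obtain ⟨c, hc⟩ := Submodule.mem_span_singleton.mp hs
    set t : ℝ := inner ℝ h5 x with htdef
    have hxmem : x ∈ Submodule.span ℝ {x} := Submodule.mem_span_singleton_self x
    have hperp : (inner ℝ x (h5 - A2 h5) : ℝ) = 0 :=
      (Submodule.mem_orthogonal _ _).mp ho x hxmem
    have ht : t = c * ‖x‖ ^ 2 := by
      have h1 : (inner ℝ x h5 : ℝ) = (inner ℝ x (A2 h5) : ℝ) := by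
        have := hperp
        rw [inner_sub_right] at this
        linarith
      have h2 : (inner ℝ x (A2 h5) : ℝ) = c * ‖x‖ ^ 2 := by
        rw [← hc, inner_smul_right, real_inner_self_eq_norm_sq]
      rw [htdef, real_inner_comm, h1, h2]
    have key : ∀ n : ℕ, |t| * ((n:ℝ) + 1) ≤ ‖h4‖ := by
      intro n
      have hn : (B1 h4) n + (B2 h5) n = 0 := by
        have h' : (B1 h4 + B2 h5 : lp (fun _ : ℕ => ℝ) 2) n
            = (0 : lp (fun _ : ℕ => ℝ) 2) n := by rw [heq]
        simpa [lp.coeFn_add] using h'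
      rw [hB1 h4 n, hB2 h5] at hn
      have hsm : ((t • x : lp (fun _ : ℕ => ℝ) 2) : ℕ → ℝ) n = t * x n := by
        simp [lp.coeFn_smul]
      rw [← htdef] at hn
      rw [hsm, hx n] at hn
      have hne : ((n:ℝ) + 1) ≠ 0 := by positivity
      have hval : h4 n = -t * ((n:ℝ) + 1) := by
        field_simp at hn
        nlinarith [hn]
      have hb : |h4 n| ≤ ‖h4‖ := by
        have := lp.norm_apply_le_norm (by norm_num : (2:ENNReal) ≠ 0) h4 n
        simpa using this
      rw [hval] at hb
      calc |t| * ((n:ℝ) + 1) = |(-t) * ((n:ℝ)+1)| := by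
            rw [abs_mul, abs_neg]
            rw [abs_of_pos (by positivity : (0:ℝ) < (n:ℝ)+1)]
        _ ≤ ‖h4‖ := hb
    have t0 : t = 0 := by
      by_contra ht0
      have habs : 0 < |t| := abs_pos.mpr ht0
      obtain ⟨n, hn⟩ := exists_nat_gt (‖h4‖ / |t|)
      have h1 : ‖h4‖ / |t| < (n:ℝ) + 1 := by linarith
      have h2 : ‖h4‖ < |t| * ((n:ℝ) + 1) := by
        rw [div_lt_iff₀ habs] at h1
        nlinarith
      exact absurd (key n) (not_le.mpr h2)
    have c0 : c = 0 := by
      rw [t0] at ht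
      have : ‖x‖ ^ 2 ≠ 0 := by positivity
      field_simp at ht
      exact (mul_eq_zero.mp ht.symm).resolve_right this
    rw [← hc, c0, zero_smul]
  · intro hall
    obtain ⟨h2, hA1x, hle⟩ := hall x (‖x‖ / 2) (by linarith)
    rw [hA1] at hA1x
    simp only [ContinuousLinearMap.zero_apply] at hA1x
    exact last ⟨h2, hA1x.symm, hle⟩
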